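/- Let X ∈ C^α([0,T]) and Y ∈ C^β([0,T]) with α, β > 0 and α + β > 1. Then the forward integral ∫₀^· Y d⁻X exists (uniformly on [0,T]) and coincides with the Young integral ∫₀^· Y d^{(y)}X; the same holds for the backward and symmetric integrals. -/

import Mathlib

open MeasureTheory Filter Set Topology

/-- `f` is extended constantly outside `[0,T]`. -/
def ExtConst (T : ℝ) (f : ℝ → ℝ) : Prop :=
  (∀ t ≤ (0:ℝ), f t = f 0) ∧ ∀ t, T ≤ t → f t = f T

/-- `f` is `γ`-Hölder on `[0,T]` with constant `N`. -/
def HolderC (T γ N : ℝ) (f : ℝ → ℝ) : Prop :=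
  ∀ s ∈ Set.Icc (0:ℝ) T, ∀ t ∈ Set.Icc (0:ℝ) T, |f t - f s| ≤ N * |t - s| ^ γ

/-- The `ε`-forward integral `I⁻(ε,Y,dX)(t)`. -/
noncomputable def Iminus (ε : ℝ) (Y X : ℝ → ℝ) (t : ℝ) : ℝ :=
  ∫ s in (0:ℝ)..t, Y s * (X (s + ε) - X s) / ε

/-- The `ε`-backward integral `I⁺(ε,Y,dX)(t)`. -/
noncomputable def Iplus (ε : ℝ) (Y X : ℝ → ℝ) (t : ℝ) : ℝ :=
  ∫ s in (0:ℝ)..t, Y s * (X s - X (s - ε)) / ε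

/-- The `ε`-symmetric integral `I⁰(ε,Y,dX)(t)`. -/
noncomputable def Izero (ε : ℝ) (Y X : ℝ → ℝ) (t : ℝ) : ℝ :=
  ∫ s in (0:ℝ)..t, Y s * (X (s + ε) - X (s - ε)) / (2 * ε)

lemma sum_double (n : ℕ) (f : ℕ → ℝ) :
    ∑ i ∈ Finset.range (2*n), f i = ∑ i ∈ Finset.range n, (f (2*i) + f (2*i+1)) := by
  induction n with
  | zero => simp
  | succ m ih =>
    rw [show 2*(m+1) = (2*m+1)+1 by ring, Finset.sum_range_succ, Finset.sum_range_succ,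
      ih, Finset.sum_range_succ]
    ring

lemma holder_nonneg {T γ N : ℝ} {f : ℝ → ℝ} (hT : 0 < T) (h : HolderC T γ N f) : 0 ≤ N := by
  have h0 := h 0 (by constructor <;> simp [hT.le]) T (by constructor <;> simp [hT.le])
  have hpos : (0:ℝ) < |T - 0| ^ γ := by
    apply Real.rpow_pos_of_pos; simp [abs_of_pos hT, hT]
  nlinarith [abs_nonneg (f T - f 0)]

lemma holder_glob {T γ N : ℝ} {f : ℝ → ℝ} (hT : 0 < T) (hγ : 0 < γ)
    (hf : HolderC T γ N f) (he : ExtConst T f) :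
    ∀ s t : ℝ, |f t - f s| ≤ N * |t - s| ^ γ := by
  have hN : 0 ≤ N := holder_nonneg hT hf
  set c : ℝ → ℝ := fun x => max 0 (min x T) with hc
  have hmem : ∀ x, c x ∈ Set.Icc (0:ℝ) T := by
    intro x; constructor
    · exact le_max_left _ _
    · exact max_le hT.le (min_le_right _ _)
  have hfc : ∀ x, f x = f (c x) := by
    intro x
    rcases le_total x 0 with hx | hx
    · rw [he.1 x hx]
      have : c x = 0 := by
        simp only [hc]
        rw [min_eq_left (hx.trans hT.le), max_eq_left hx]
      rw [this]
    · rcases le_total x T with hx2 | hx2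
      · have : c x = x := by simp only [hc]; rw [min_eq_left hx2, max_eq_right hx]
        rw [this]
      · rw [he.2 x hx2]
        have : c x = T := by simp only [hc]; rw [min_eq_right hx2, max_eq_right hT.le]
        rw [this]
  have hlip : ∀ s t : ℝ, |c t - c s| ≤ |t - s| := by
    intro s t
    have h1 : |min t T - min s T| ≤ |t - s| := by
      rw [abs_sub_le_iff]
      have d0 : (0:ℝ) ≤ |t - s| := abs_nonneg _
      have hts : s - |t - s| ≤ t := by
        have := neg_abs_le (t - s); linarith
      have hst : t - |t - s| ≤ s := by
        have := le_abs_self (t - s); linarith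
      constructor
      · have : min t T - |t - s| ≤ min s T := by
          rw [← min_sub_sub_right]
          exact min_le_min hst (by linarith)
        linarith
      · have : min s T - |t - s| ≤ min t T := by
          rw [← min_sub_sub_right]
          exact min_le_min hts (by linarith)
        linarith
    calc |c t - c s| = |max (min t T) 0 - max (min s T) 0| := by
          simp only [hc]; rw [max_comm (0:ℝ) (min t T), max_comm (0:ℝ) (min s T)]
      _ ≤ |min t T - min s T| := abs_max_sub_max_le_abs _ _ _
      _ ≤ |t - s| := h1
  intro s t
  rw [hfc t, hfc s]
  calc |f (c t) - f (c s)| ≤ N * |c t - c s| ^ γ := hf (c s) (hmem s) (c t) (hmem t)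
    _ ≤ N * |t - s| ^ γ := by
        apply mul_le_mul_of_nonneg_left _ hN
        exact Real.rpow_le_rpow (abs_nonneg _) (hlip s t) hγ.le

lemma holder_mono {T a N : ℝ} {f : ℝ → ℝ} (hT : 0 < T) (hf : HolderC T a N f)
    (hN : 0 ≤ N) {b : ℝ} (hb : 0 < b) (hba : b ≤ a) :
    HolderC T b (N * max T 1 ^ (a - b)) f := by
  intro s hs t ht
  have hM1 : (1:ℝ) ≤ max T 1 := le_max_right _ _
  have hMnn : (0:ℝ) ≤ max T 1 ^ (a - b) := Real.rpow_nonneg (by linarith) _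
  rcases eq_or_ne t s with rfl | hne
  · simp only [sub_self, abs_zero]
    rw [Real.zero_rpow hb.ne']
    simp
  · have habs : (0:ℝ) < |t - s| := abs_pos.2 (sub_ne_zero.2 hne)
    have hle : |t - s| ≤ max T 1 := by
      have : |t - s| ≤ T := by
        rw [abs_sub_le_iff]; constructor <;>
          [linarith [ht.1, ht.2, hs.1, hs.2]; linarith [ht.1, ht.2, hs.1, hs.2]]
      exact this.trans (le_max_left _ _)
    calc |f t - f s| ≤ N * |t - s| ^ a := hf s hs t ht
      _ = N * (|t - s| ^ b * |t - s| ^ (a - b)) := by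
          rw [← Real.rpow_add habs]; ring_nf
      _ ≤ N * (|t - s| ^ b * max T 1 ^ (a - b)) := by
          apply mul_le_mul_of_nonneg_left _ hN
          apply mul_le_mul_of_nonneg_left _ (Real.rpow_nonneg (abs_nonneg _) _)
          exact Real.rpow_le_rpow (abs_nonneg _) hle (by linarith)
      _ = N * max T 1 ^ (a - b) * |t - s| ^ b := by ring

lemma young_bound (T β γ NY : ℝ) (hT : 0 < T) (hβ : 0 < β) (hγ : 0 < γ)
    (hγβ : 1 < γ + β) (Y : ℝ → ℝ) (hYc : Continuous Y) (hY : HolderC T β NY Y) :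
    ∃ K : ℝ, 0 ≤ K ∧ ∀ D : ℝ → ℝ, ContDiff ℝ 1 D → ∀ N : ℝ, 0 ≤ N → HolderC T γ N D →
      ∀ t ∈ Set.Icc (0:ℝ) T, |∫ s in (0:ℝ)..t, Y s * deriv D s| ≤ K * N := by
  have hNY : 0 ≤ NY := holder_nonneg hT hY
  set r : ℝ := (2:ℝ) ^ (1 - (β + γ)) with hrdef
  have hr0 : 0 ≤ r := (Real.rpow_pos_of_pos two_pos _).le
  have hr1 : r < 1 := by
    apply Real.rpow_lt_one_of_one_lt_of_neg one_lt_two; linarith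
  set Cg : ℝ := (2:ℝ) ^ (-(β + γ)) * (1 - r)⁻¹ with hCg
  have hCg0 : 0 ≤ Cg :=
    mul_nonneg (Real.rpow_pos_of_pos two_pos _).le (inv_nonneg.2 (by linarith))
  refine ⟨|Y 0| * T ^ γ + NY * T ^ (β + γ) * Cg, by positivity, ?_⟩
  intro D hD N hN hDH t ht
  obtain ⟨ht0, htT⟩ := ht
  rcases eq_or_lt_of_le ht0 with rfl | htpos
  · rw [intervalIntegral.integral_same]; simp; positivity
  -- continuity of integrand
  have hD' : Continuous (deriv D) := hD.continuous_deriv le_rfl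
  have hcont : Continuous (fun s => Y s * deriv D s) := hYc.mul hD'
  obtain ⟨MD, hMD⟩ := (isCompact_Icc : IsCompact (Set.Icc (0:ℝ) T)).exists_bound_of_continuousOn
    (hD'.continuousOn)
  have hMD0 : 0 ≤ MD := le_trans (norm_nonneg _) (hMD 0 ⟨le_rfl, hT.le⟩)
  -- dyadic points
  set pts : ℕ → ℕ → ℝ := fun k i => t * i / 2 ^ k with hpts
  have hptsmem : ∀ k i, i ≤ 2 ^ k → pts k i ∈ Set.Icc (0:ℝ) T := by
    intro k i hi
    have h2k : (0:ℝ) < 2 ^ k := by positivity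
    constructor
    · apply div_nonneg (by positivity) h2k.le
    · rw [div_le_iff₀ h2k]
      calc t * i ≤ t * 2 ^ k := by
            apply mul_le_mul_of_nonneg_left _ htpos.le
            exact_mod_cast Nat.cast_le.2 hi
        _ ≤ T * 2 ^ k := by nlinarith
  have hpts_succ : ∀ k i, pts k (i+1) - pts k i = t / 2 ^ k := by
    intro k i
    simp only [hpts]
    push_cast
    field_simp
    ring
  have hpts0 : ∀ k, pts k 0 = 0 := by intro k; simp [hpts]
  have hptsend : ∀ k, pts k (2 ^ k) = t := by
    intro k; simp only [hpts]
    rw [div_eq_iff (by positivity : ((2:ℝ)^k) ≠ 0)]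
    push_cast; ring
  set S : ℕ → ℝ := fun k =>
    ∑ i ∈ Finset.range (2 ^ k), Y (pts k i) * (D (pts k (i+1)) - D (pts k i)) with hS
  set I : ℝ := ∫ s in (0:ℝ)..t, Y s * deriv D s with hI
  -- Riemann convergence
  have hconv : Tendsto S atTop (𝓝 I) := by
    have hbound : ∀ k : ℕ, |I - S k| ≤ NY * MD * t * (t / 2 ^ k) ^ β := by
      intro k
      have h2k : (0:ℝ) < 2 ^ k := by positivity
      have hmesh0 : 0 ≤ t / 2 ^ k := by positivity
      have hint : ∀ (a b : ℝ), IntervalIntegrable (fun s => Y s * deriv D s) volume a b :=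
        fun a b => hcont.intervalIntegrable a b
      have hsplit : I = ∑ i ∈ Finset.range (2 ^ k),
          ∫ s in pts k i..pts k (i+1), Y s * deriv D s := by
        rw [hI, ← hpts0 k, ← hptsend k]
        exact (intervalIntegral.sum_integral_adjacent_intervals (fun i _ => hint _ _)).symm
      rw [hsplit, hS, ← Finset.sum_sub_distrib]
      refine (Finset.abs_sum_le_sum_abs _ _).trans ?_
      have hterm : ∀ i ∈ Finset.range (2 ^ k),
          |(∫ s in pts k i..pts k (i+1), Y s * deriv D s)
            - Y (pts k i) * (D (pts k (i+1)) - D (pts k i))|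
          ≤ NY * (t / 2 ^ k) ^ β * MD * (t / 2 ^ k) := by
        intro i hi
        rw [Finset.mem_range] at hi
        set a := pts k i
        set b := pts k (i+1)
        have hab : b - a = t / 2 ^ k := hpts_succ k i
        have haT : a ∈ Set.Icc (0:ℝ) T := hptsmem k i hi.le
        have hbT : b ∈ Set.Icc (0:ℝ) T := hptsmem k (i+1) hi
        have hfund : D b - D a = ∫ s in a..b, deriv D s := by
          rw [intervalIntegral.integral_deriv_eq_sub (fun x _ => (hD.differentiable one_ne_zero).differentiableAt)
            (hD'.intervalIntegrable a b)]
        have heq : (∫ s in a..b, Y s * deriv D s) - Y a * (D b - D a)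
            = ∫ s in a..b, (Y s - Y a) * deriv D s := by
          rw [hfund, ← intervalIntegral.integral_const_mul,
            ← intervalIntegral.integral_sub (hint a b)
              ((hD'.intervalIntegrable a b).const_mul _)]
          congr 1; ext s; ring
        rw [heq]
        have hbd : ∀ x ∈ Set.uIoc a b, ‖(Y x - Y a) * deriv D x‖ ≤ NY * (t / 2 ^ k) ^ β * MD := by
          intro x hx
          rw [Set.uIoc_of_le (by linarith [hab] : a ≤ b)] at hx
          have hxT : x ∈ Set.Icc (0:ℝ) T := ⟨haT.1.trans hx.1.le, hx.2.trans hbT.2⟩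
          have h1 : |Y x - Y a| ≤ NY * (t / 2 ^ k) ^ β := by
            refine (hY a haT x hxT).trans ?_
            apply mul_le_mul_of_nonneg_left _ hNY
            apply Real.rpow_le_rpow (abs_nonneg _) _ hβ.le
            rw [abs_of_nonneg (by linarith [hx.1] : (0:ℝ) ≤ x - a)]
            linarith [hx.2, hab]
          have h2 : ‖deriv D x‖ ≤ MD := hMD x hxT
          rw [norm_mul]
          exact mul_le_mul h1 h2 (norm_nonneg _) (by positivity)
        have := intervalIntegral.norm_integral_le_of_norm_le_const hbd
        rw [Real.norm_eq_abs] at this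
        refine this.trans ?_
        rw [abs_of_nonneg (by rw [hab]; positivity : (0:ℝ) ≤ b - a), hab]
      refine (Finset.sum_le_sum hterm).trans ?_
      rw [Finset.sum_const, Finset.card_range, nsmul_eq_mul]
      have : (2:ℝ) ^ k * (t / 2 ^ k) = t := by field_simp
      calc (2 ^ k : ℕ) * (NY * (t / 2 ^ k) ^ β * MD * (t / 2 ^ k))
          = NY * MD * ((2:ℝ) ^ k * (t / 2 ^ k)) * (t / 2 ^ k) ^ β := by push_cast; ring
        _ = NY * MD * t * (t / 2 ^ k) ^ β := by rw [this]
      exact le_of_eq rfl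
    have hrhs : Tendsto (fun k : ℕ => NY * MD * t * (t / 2 ^ k) ^ β) atTop (𝓝 0) := by
      have h1 : Tendsto (fun k : ℕ => t / 2 ^ k) atTop (𝓝 0) :=
        tendsto_const_nhds.div_atTop (tendsto_pow_atTop_atTop_of_one_lt one_lt_two)
      have h2 : ContinuousAt (fun x : ℝ => x ^ β) 0 :=
        Real.continuousAt_rpow_const 0 β (Or.inr hβ.le)
      have h3 : Tendsto (fun k : ℕ => (t / 2 ^ k) ^ β) atTop (𝓝 0) := by
        have := h2.tendsto.comp h1
        rwa [Real.zero_rpow hβ.ne'] at this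
      have h4 := h3.const_mul (NY * MD * t)
      rw [mul_zero] at h4
      refine h4.congr (fun k => by ring)
    have habs : Tendsto (fun k => |I - S k|) atTop (𝓝 0) :=
      squeeze_zero (fun k => abs_nonneg _) hbound hrhs
    rw [tendsto_iff_dist_tendsto_zero]
    simpa [Real.dist_eq, abs_sub_comm] using habs
  -- dyadic step estimate
  have hstep : ∀ k : ℕ, |S (k+1) - S k| ≤ NY * N * t ^ (β + γ) * ((2:ℝ) ^ (-(β+γ)) * r ^ k) := by
    intro k
    have h2k1 : (0:ℝ) < 2 ^ (k+1) := by positivity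
    have hmesh : (0:ℝ) < t / 2 ^ (k+1) := by positivity
    have hSk1 : S (k+1) = ∑ i ∈ Finset.range (2 ^ k),
        (Y (pts (k+1) (2*i)) * (D (pts (k+1) (2*i+1)) - D (pts (k+1) (2*i)))
         + Y (pts (k+1) (2*i+1)) * (D (pts (k+1) (2*i+1+1)) - D (pts (k+1) (2*i+1)))) := by
      simp only [hS]
      rw [show 2 ^ (k+1) = 2 * 2 ^ k by ring]
      exact sum_double _ _
    have hpa : ∀ i, pts (k+1) (2*i) = pts k i := by
      intro i; simp only [hpts]; push_cast; rw [pow_succ]; field_simp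
    have hSk1' : S (k+1) - S k = ∑ i ∈ Finset.range (2 ^ k),
        ((Y (pts (k+1) (2*i+1)) - Y (pts k i))
          * (D (pts k (i+1)) - D (pts (k+1) (2*i+1)))) := by
      rw [hSk1]; simp only [hS]; rw [← Finset.sum_sub_distrib]
      apply Finset.sum_congr rfl
      intro i _
      rw [← hpa i, show 2*i+1+1 = 2*(i+1) by ring, hpa (i+1), hpa i]
      ring
    rw [hSk1']
    refine (Finset.abs_sum_le_sum_abs _ _).trans ?_
    have hterm : ∀ i ∈ Finset.range (2 ^ k),
        |(Y (pts (k+1) (2*i+1)) - Y (pts k i))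
          * (D (pts k (i+1)) - D (pts (k+1) (2*i+1)))|
        ≤ (NY * (t / 2 ^ (k+1)) ^ β) * (N * (t / 2 ^ (k+1)) ^ γ) := by
      intro i hi
      rw [Finset.mem_range] at hi
      have h2i1 : 2*i+1 ≤ 2 ^ (k+1) := by
        have : i + 1 ≤ 2 ^ k := hi
        calc 2*i+1 ≤ 2*(i+1) := by omega
          _ ≤ 2 * 2 ^ k := by omega
          _ = 2 ^ (k+1) := by ring
      have hmem1 : pts (k+1) (2*i+1) ∈ Set.Icc (0:ℝ) T := hptsmem (k+1) (2*i+1) h2i1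
      have hmema : pts k i ∈ Set.Icc (0:ℝ) T := hptsmem k i hi.le
      have hmemc : pts k (i+1) ∈ Set.Icc (0:ℝ) T := hptsmem k (i+1) hi
      have hd1 : pts (k+1) (2*i+1) - pts k i = t / 2 ^ (k+1) := by
        rw [← hpa i]; exact hpts_succ (k+1) (2*i)
      have hd2 : pts k (i+1) - pts (k+1) (2*i+1) = t / 2 ^ (k+1) := by
        rw [show pts k (i+1) = pts (k+1) (2*(i+1)) from (hpa (i+1)).symm,
          show 2*(i+1) = (2*i+1)+1 by ring]
        exact hpts_succ (k+1) (2*i+1)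
      rw [abs_mul]
      apply mul_le_mul
      · refine (hY (pts k i) hmema (pts (k+1) (2*i+1)) hmem1).trans ?_
        rw [hd1, abs_of_nonneg hmesh.le]
      · refine (hDH (pts (k+1) (2*i+1)) hmem1 (pts k (i+1)) hmemc).trans ?_
        rw [hd2, abs_of_nonneg hmesh.le]
      · exact abs_nonneg _
      · positivity
    refine (Finset.sum_le_sum hterm).trans ?_
    rw [Finset.sum_const, Finset.card_range, nsmul_eq_mul]
    -- algebraic identity
    have hkey : ((2:ℝ) ^ k : ℝ) * ((NY * (t / 2 ^ (k+1)) ^ β) * (N * (t / 2 ^ (k+1)) ^ γ))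
        = NY * N * t ^ (β + γ) * ((2:ℝ) ^ (-(β+γ)) * r ^ k) := by
      have e1 : (t / 2 ^ (k+1)) ^ β * (t / 2 ^ (k+1)) ^ γ = (t / 2 ^ (k+1)) ^ (β + γ) :=
        (Real.rpow_add hmesh β γ).symm
      have e2 : (t / 2 ^ (k+1)) ^ (β + γ) = t ^ (β+γ) * ((2:ℝ) ^ (k+1) : ℝ) ^ (-(β+γ)) := by
        rw [Real.div_rpow htpos.le h2k1.le, Real.rpow_neg h2k1.le, div_eq_mul_inv]
      have e3 : ((2:ℝ) ^ (k+1) : ℝ) ^ (-(β+γ)) = (2:ℝ) ^ (((k:ℝ)+1) * (-(β+γ))) := by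
        rw [← Real.rpow_natCast (2:ℝ) (k+1), ← Real.rpow_mul two_pos.le]
        push_cast; ring_nf
      have e4 : ((2:ℝ) ^ k : ℝ) * (2:ℝ) ^ (((k:ℝ)+1) * (-(β+γ)))
          = (2:ℝ) ^ (-(β+γ)) * r ^ k := by
        rw [hrdef, ← Real.rpow_natCast (2:ℝ) k, ← Real.rpow_natCast ((2:ℝ) ^ (1 - (β+γ))) k,
          ← Real.rpow_mul two_pos.le, ← Real.rpow_add two_pos, ← Real.rpow_add two_pos]
        congr 1; ring
      calc ((2:ℝ) ^ k : ℝ) * ((NY * (t / 2 ^ (k+1)) ^ β) * (N * (t / 2 ^ (k+1)) ^ γ))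
          = NY * N * ((t / 2 ^ (k+1)) ^ β * (t / 2 ^ (k+1)) ^ γ) * ((2:ℝ) ^ k) := by ring
        _ = NY * N * (t ^ (β+γ) * ((2:ℝ) ^ (k+1) : ℝ) ^ (-(β+γ))) * ((2:ℝ) ^ k) := by
            rw [e1, e2]
        _ = NY * N * t ^ (β+γ) * (((2:ℝ) ^ k) * ((2:ℝ) ^ (k+1) : ℝ) ^ (-(β+γ))) := by ring
        _ = NY * N * t ^ (β + γ) * ((2:ℝ) ^ (-(β+γ)) * r ^ k) := by rw [e3, e4]
    apply le_of_eq
    push_cast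
    linarith [hkey]
  -- telescoping bound
  have htel : ∀ K : ℕ, |S K - S 0| ≤ NY * N * t ^ (β + γ) * Cg := by
    intro K
    have : S K - S 0 = ∑ k ∈ Finset.range K, (S (k+1) - S k) := by
      rw [Finset.sum_range_sub]
    rw [this]
    refine (Finset.abs_sum_le_sum_abs _ _).trans ?_
    refine (Finset.sum_le_sum (fun k _ => hstep k)).trans ?_
    have : ∑ k ∈ Finset.range K, NY * N * t ^ (β + γ) * ((2:ℝ) ^ (-(β+γ)) * r ^ k)
        = (NY * N * t ^ (β + γ) * (2:ℝ) ^ (-(β+γ))) * ∑ k ∈ Finset.range K, r ^ k := by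
      rw [Finset.mul_sum]; apply Finset.sum_congr rfl; intro k _; ring
    rw [this, hCg]
    have hgeom : ∑ k ∈ Finset.range K, r ^ k ≤ (1 - r)⁻¹ :=
      sum_le_hasSum _ (fun i _ => pow_nonneg hr0 i) (hasSum_geometric_of_lt_one hr0 hr1)
    have hc0 : (0:ℝ) ≤ NY * N * t ^ (β + γ) * (2:ℝ) ^ (-(β+γ)) := by positivity
    calc (NY * N * t ^ (β + γ) * (2:ℝ) ^ (-(β+γ))) * ∑ k ∈ Finset.range K, r ^ k
        ≤ (NY * N * t ^ (β + γ) * (2:ℝ) ^ (-(β+γ))) * (1 - r)⁻¹ :=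
          mul_le_mul_of_nonneg_left hgeom hc0
      _ = NY * N * t ^ (β + γ) * ((2:ℝ) ^ (-(β+γ)) * (1 - r)⁻¹) := by ring
  -- pass to the limit
  have hIS0 : |I - S 0| ≤ NY * N * t ^ (β + γ) * Cg := by
    have h1 : Tendsto (fun K => |S K - S 0|) atTop (𝓝 |I - S 0|) :=
      ((hconv.sub_const (S 0)).abs)
    exact le_of_tendsto h1 (Eventually.of_forall htel)
  have hS0 : |S 0| ≤ |Y 0| * (N * t ^ γ) := by
    have : S 0 = Y 0 * (D t - D 0) := by
      simp only [hS, pow_zero, Finset.range_one, Finset.sum_singleton]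
      rw [hpts0 0, show pts 0 1 = t by simp [hpts]]
    rw [this, abs_mul]
    apply mul_le_mul_of_nonneg_left _ (abs_nonneg _)
    have := hDH 0 ⟨le_rfl, hT.le⟩ t ⟨ht0, htT⟩
    rwa [sub_zero, abs_of_nonneg ht0] at this
  -- combine
  have htT' : t ^ γ ≤ T ^ γ := Real.rpow_le_rpow ht0 htT hγ.le
  have htT'' : t ^ (β+γ) ≤ T ^ (β+γ) := Real.rpow_le_rpow ht0 htT (by linarith)
  calc |I| ≤ |S 0| + |I - S 0| := by
        have := abs_sub_abs_le_abs_sub I (S 0)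
        have h2 := abs_add_le (S 0) (I - S 0)
        simp only [add_sub_cancel] at h2
        linarith
    _ ≤ |Y 0| * (N * t ^ γ) + NY * N * t ^ (β + γ) * Cg := add_le_add hS0 hIS0
    _ ≤ |Y 0| * (N * T ^ γ) + NY * N * T ^ (β + γ) * Cg := by
        have h1 : |Y 0| * (N * t ^ γ) ≤ |Y 0| * (N * T ^ γ) := by
          apply mul_le_mul_of_nonneg_left _ (abs_nonneg _)
          exact mul_le_mul_of_nonneg_left htT' hN
        have h2 : NY * N * t ^ (β + γ) * Cg ≤ NY * N * T ^ (β + γ) * Cg := by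
          apply mul_le_mul_of_nonneg_right _ hCg0
          exact mul_le_mul_of_nonneg_left htT'' (by positivity)
        linarith
    _ = (|Y 0| * T ^ γ + NY * T ^ (β + γ) * Cg) * N := by ring

lemma master {ι : Type*} {l : Filter ι} (T β γ' α₀ NY : ℝ) (hT : 0 < T)
    (hβ : 0 < β) (hγ' : 0 < γ') (hγβ : 1 < γ' + β) (hα₀ : 0 < α₀) (hα₀β : 1 < α₀ + β)
    (X Y : ℝ → ℝ) (hYc : Continuous Y) (hY : HolderC T β NY Y)
    (Z : ℕ → ℝ → ℝ) (ZN : ℕ → ℝ) (hZ : ∀ n, ContDiff ℝ 1 (Z n))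
    (hZN0 : ∀ n, 0 ≤ ZN n) (hZNto : Tendsto ZN atTop (𝓝 0))
    (hZH : ∀ n, HolderC T α₀ (ZN n) (fun t => Z n t - X t))
    (YI : ℝ → ℝ)
    (hYI : ∀ t ∈ Set.Icc (0:ℝ) T,
      Tendsto (fun n => ∫ s in (0:ℝ)..t, Y s * deriv (Z n) s) atTop (𝓝 (YI t)))
    (W : ι → ℝ → ℝ) (M : ι → ℝ) (hMto : Tendsto M l (𝓝 0))
    (hW : ∀ᶠ i in l, ContDiff ℝ 1 (W i) ∧ 0 ≤ M i ∧
      HolderC T γ' (M i) (fun t => W i t - X t)) :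
    TendstoUniformlyOn (fun i t => ∫ s in (0:ℝ)..t, Y s * deriv (W i) s) YI l
      (Set.Icc 0 T) := by
  set γm : ℝ := min γ' α₀ with hγm
  have hγm0 : 0 < γm := lt_min hγ' hα₀
  have hγmβ : 1 < γm + β := by
    rcases min_cases γ' α₀ with ⟨h, _⟩ | ⟨h, _⟩ <;> rw [hγm, h] <;> linarith
  obtain ⟨K, hK0, hKb⟩ := young_bound T β γm NY hT hβ hγm0 hγmβ Y hYc hY
  set c1 : ℝ := max T 1 ^ (γ' - γm) with hc1
  set c0 : ℝ := max T 1 ^ (α₀ - γm) with hc0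
  have hc1nn : 0 ≤ c1 := Real.rpow_nonneg (le_trans zero_le_one (le_max_right _ _)) _
  have hc0nn : 0 ≤ c0 := Real.rpow_nonneg (le_trans zero_le_one (le_max_right _ _)) _
  -- key pairwise estimate
  have est : ∀ i : ι, ContDiff ℝ 1 (W i) → 0 ≤ M i →
      HolderC T γ' (M i) (fun t => W i t - X t) → ∀ n : ℕ, ∀ t ∈ Set.Icc (0:ℝ) T,
      |(∫ s in (0:ℝ)..t, Y s * deriv (W i) s) - ∫ s in (0:ℝ)..t, Y s * deriv (Z n) s|
        ≤ K * (M i * c1 + ZN n * c0) := by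
    intro i hWc hMi hWH n t ht
    set D : ℝ → ℝ := fun s => W i s - Z n s with hD
    have hDc : ContDiff ℝ 1 D := hWc.sub (hZ n)
    have hDH : HolderC T γm (M i * c1 + ZN n * c0) D := by
      intro s hs u hu
      have h1 := holder_mono hT hWH hMi hγm0 (min_le_left _ _) s hs u hu
      have h2 := holder_mono hT (hZH n) (hZN0 n) hγm0 (min_le_right _ _) s hs u hu
      simp only at h1 h2
      have : D u - D s = ((W i u - X u) - (W i s - X s)) - ((Z n u - X u) - (Z n s - X s)) := by
        simp only [hD]; ring
      rw [this]
      calc |((W i u - X u) - (W i s - X s)) - ((Z n u - X u) - (Z n s - X s))|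
          ≤ |(W i u - X u) - (W i s - X s)| + |(Z n u - X u) - (Z n s - X s)| :=
            abs_sub _ _
        _ ≤ M i * c1 * |u - s| ^ γm + ZN n * c0 * |u - s| ^ γm := add_le_add h1 h2
        _ = (M i * c1 + ZN n * c0) * |u - s| ^ γm := by ring
    have hint1 : IntervalIntegrable (fun s => Y s * deriv (W i) s) volume 0 t :=
      (hYc.mul (hWc.continuous_deriv le_rfl)).intervalIntegrable _ _
    have hint2 : IntervalIntegrable (fun s => Y s * deriv (Z n) s) volume 0 t :=
      (hYc.mul ((hZ n).continuous_deriv le_rfl)).intervalIntegrable _ _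
    have heq : (∫ s in (0:ℝ)..t, Y s * deriv (W i) s)
        - (∫ s in (0:ℝ)..t, Y s * deriv (Z n) s) = ∫ s in (0:ℝ)..t, Y s * deriv D s := by
      rw [← intervalIntegral.integral_sub hint1 hint2]
      apply intervalIntegral.integral_congr
      intro s _
      show Y s * deriv (W i) s - Y s * deriv (Z n) s = Y s * deriv D s
      have : deriv D s = deriv (W i) s - deriv (Z n) s := by
        apply HasDerivAt.deriv
        exact ((hWc.differentiable one_ne_zero s).hasDerivAt).sub
          (((hZ n).differentiable one_ne_zero s).hasDerivAt)
      rw [this]; ring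
    rw [heq]
    exact hKb D hDc _ (add_nonneg (mul_nonneg hMi hc1nn) (mul_nonneg (hZN0 n) hc0nn)) hDH t ht
  -- limit estimate
  have lest : ∀ i : ι, ContDiff ℝ 1 (W i) → 0 ≤ M i →
      HolderC T γ' (M i) (fun t => W i t - X t) → ∀ t ∈ Set.Icc (0:ℝ) T,
      |(∫ s in (0:ℝ)..t, Y s * deriv (W i) s) - YI t| ≤ K * (M i * c1) := by
    intro i hWc hMi hWH t ht
    have h1 : Tendsto (fun n => |(∫ s in (0:ℝ)..t, Y s * deriv (W i) s)
        - ∫ s in (0:ℝ)..t, Y s * deriv (Z n) s|) atTop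
        (𝓝 |(∫ s in (0:ℝ)..t, Y s * deriv (W i) s) - YI t|) :=
      ((hYI t ht).const_sub _).abs
    have h2 : Tendsto (fun n => K * (M i * c1 + ZN n * c0)) atTop (𝓝 (K * (M i * c1))) := by
      have := ((hZNto.mul_const c0).const_add (M i * c1)).const_mul K
      simpa using this
    exact le_of_tendsto_of_tendsto' h1 h2 (fun n => est i hWc hMi hWH n t ht)
  rw [Metric.tendstoUniformlyOn_iff]
  intro η hη
  have hKc : 0 < K * c1 + 1 := by positivity
  have hev : ∀ᶠ i in l, |M i| < η / (K * c1 + 1) := by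
    have := Metric.tendsto_nhds.mp hMto (η / (K * c1 + 1)) (by positivity)
    simpa [Real.dist_eq] using this
  filter_upwards [hW, hev] with i hi hMi
  obtain ⟨hWc, hMi0, hWH⟩ := hi
  intro t ht
  rw [Real.dist_eq]
  calc |YI t - (∫ s in (0:ℝ)..t, Y s * deriv (W i) s)|
      = |(∫ s in (0:ℝ)..t, Y s * deriv (W i) s) - YI t| := abs_sub_comm _ _
    _ ≤ K * (M i * c1) := lest i hWc hMi0 hWH t ht
    _ ≤ (K * c1 + 1) * M i := by nlinarith
    _ < (K * c1 + 1) * (η / (K * c1 + 1)) := by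
        apply mul_lt_mul_of_pos_left _ hKc
        calc M i ≤ |M i| := le_abs_self _
          _ < η / (K * c1 + 1) := hMi
    _ = η := by field_simp

lemma moll (α α₀ NX : ℝ) (hα₀ : 0 < α₀) (hlt : α₀ ≤ α) (hNX : 0 ≤ NX)
    (X : ℝ → ℝ) (hXc : Continuous X)
    (globX : ∀ s t : ℝ, |X t - X s| ≤ NX * |t - s| ^ α)
    (ε p q : ℝ) (hε : 0 < ε) (hp : -ε ≤ p) (hq : q ≤ ε) (hpq : p < q) :
    (∀ s : ℝ, HasDerivAt (fun s => (∫ u in (s+p)..(s+q), X u) / (q - p))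
      ((X (s+q) - X (s+p)) / (q - p)) s) ∧
    ContDiff ℝ 1 (fun s => (∫ u in (s+p)..(s+q), X u) / (q - p)) ∧
    (∀ s t : ℝ, |((∫ u in (t+p)..(t+q), X u) / (q - p) - X t)
        - ((∫ u in (s+p)..(s+q), X u) / (q - p) - X s)|
      ≤ (2 * NX * ε ^ (α - α₀)) * |t - s| ^ α₀) := by
  have hqp : 0 < q - p := by linarith
  set V : ℝ → ℝ := fun s => (∫ u in (s+p)..(s+q), X u) / (q - p) with hV
  set G : ℝ → ℝ := fun x => ∫ u in (0:ℝ)..x, X u with hGdef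
  have hG : ∀ a : ℝ, HasDerivAt G (X a) a :=
    fun a => (hXc.integral_hasStrictDerivAt 0 a).hasDerivAt
  have hVeq : V = fun s => (G (s+q) - G (s+p)) / (q - p) := by
    funext s
    simp only [hV, hGdef]
    rw [intervalIntegral.integral_interval_sub_left (hXc.intervalIntegrable _ _)
      (hXc.intervalIntegrable _ _)]
  have hd : ∀ s : ℝ, HasDerivAt V ((X (s+q) - X (s+p)) / (q - p)) s := by
    intro s
    rw [hVeq]
    have h1 : HasDerivAt (fun s : ℝ => G (s+q)) (X (s+q)) s := by
      have := (hG (s+q)).comp s ((hasDerivAt_id s).add_const q)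
      simpa [Function.comp_def] using this
    have h2 : HasDerivAt (fun s : ℝ => G (s+p)) (X (s+p)) s := by
      have := (hG (s+p)).comp s ((hasDerivAt_id s).add_const p)
      simpa [Function.comp_def] using this
    exact (h1.sub h2).div_const _
  have hcd : ContDiff ℝ 1 V := by
    rw [contDiff_one_iff_deriv]
    constructor
    · exact fun s => (hd s).differentiableAt
    · have : deriv V = fun s => (X (s+q) - X (s+p)) / (q - p) :=
        funext fun s => (hd s).deriv
      rw [this]
      exact ((hXc.comp (continuous_id.add continuous_const)).sub
        (hXc.comp (continuous_id.add continuous_const))).div_const _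
  refine ⟨hd, hcd, ?_⟩
  -- pointwise bound
  have hpt : ∀ s : ℝ, |V s - X s| ≤ NX * ε ^ α := by
    intro s
    have hXs : X s = (∫ u in (s+p)..(s+q), X s) / (q - p) := by
      rw [intervalIntegral.integral_const]
      rw [show s + q - (s + p) = q - p by ring]
      rw [smul_eq_mul]
      field_simp
    have heq : V s - X s = (∫ u in (s+p)..(s+q), (X u - X s)) / (q - p) := by
      rw [hV]
      simp only []
      rw [intervalIntegral.integral_sub (hXc.intervalIntegrable _ _)
        (intervalIntegrable_const), sub_div, ← hXs]
    rw [heq, abs_div, abs_of_pos hqp, div_le_iff₀ hqp]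
    have hbd : ∀ x ∈ Set.uIoc (s+p) (s+q), ‖X x - X s‖ ≤ NX * ε ^ α := by
      intro x hx
      rw [Set.uIoc_of_le (by linarith : s + p ≤ s + q)] at hx
      refine (globX s x).trans ?_
      apply mul_le_mul_of_nonneg_left _ hNX
      apply Real.rpow_le_rpow (abs_nonneg _) _ (by linarith : (0:ℝ) ≤ α)
      rw [abs_le]
      constructor <;> [linarith [hx.1]; linarith [hx.2]]
    have := intervalIntegral.norm_integral_le_of_norm_le_const hbd
    rw [Real.norm_eq_abs] at this
    refine this.trans ?_
    rw [show s + q - (s + p) = q - p by ring, abs_of_pos hqp]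
  -- Hölder bound for V
  have hhol : ∀ s t : ℝ, |V t - V s| ≤ NX * |t - s| ^ α := by
    intro s t
    have hrep : ∀ x : ℝ, V x = (∫ u in p..q, X (x + u)) / (q - p) := by
      intro x
      rw [hV]
      simp only []
      congr 1
      exact (intervalIntegral.integral_comp_add_left X x).symm
    have heq : V t - V s = (∫ u in p..q, (X (t + u) - X (s + u))) / (q - p) := by
      have hi1 : IntervalIntegrable (fun u => X (t + u)) volume p q :=
        (hXc.comp (continuous_const.add continuous_id)).intervalIntegrable _ _
      have hi2 : IntervalIntegrable (fun u => X (s + u)) volume p q :=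
        (hXc.comp (continuous_const.add continuous_id)).intervalIntegrable _ _
      rw [hrep t, hrep s, ← sub_div, ← intervalIntegral.integral_sub hi1 hi2]
    rw [heq, abs_div, abs_of_pos hqp, div_le_iff₀ hqp]
    have hbd : ∀ x ∈ Set.uIoc p q, ‖X (t + x) - X (s + x)‖ ≤ NX * |t - s| ^ α := by
      intro x _
      refine (globX (s+x) (t+x)).trans ?_
      rw [show t + x - (s + x) = t - s by ring]
    have := intervalIntegral.norm_integral_le_of_norm_le_const hbd
    rw [Real.norm_eq_abs] at this
    refine this.trans ?_
    rw [abs_of_pos hqp]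
  -- interpolation
  intro s t
  show |(V t - X t) - (V s - X s)| ≤ (2 * NX * ε ^ (α - α₀)) * |t - s| ^ α₀
  have hεexp : (0:ℝ) ≤ ε ^ (α - α₀) := (Real.rpow_pos_of_pos hε _).le
  rcases eq_or_ne t s with rfl | hne
  · simp only [sub_self, abs_zero]
    rw [Real.zero_rpow hα₀.ne']
    simp
  · have habs : (0:ℝ) < |t - s| := abs_pos.2 (sub_ne_zero.2 hne)
    rcases le_total |t - s| ε with hcase | hcase
    · -- use Hölder bound
      have hA : |(V t - X t) - (V s - X s)| ≤ 2 * NX * |t - s| ^ α := by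
        have h1 := hhol s t
        have h2 := globX s t
        calc |(V t - X t) - (V s - X s)| = |(V t - V s) - (X t - X s)| := by ring_nf
          _ ≤ |V t - V s| + |X t - X s| := abs_sub _ _
          _ ≤ 2 * NX * |t - s| ^ α := by linarith
      refine hA.trans ?_
      have e : |t - s| ^ α = |t - s| ^ α₀ * |t - s| ^ (α - α₀) := by
        rw [← Real.rpow_add habs]; congr 1; ring
      rw [e]
      calc 2 * NX * (|t - s| ^ α₀ * |t - s| ^ (α - α₀))
          ≤ 2 * NX * (|t - s| ^ α₀ * ε ^ (α - α₀)) := by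
            apply mul_le_mul_of_nonneg_left _ (by positivity)
            apply mul_le_mul_of_nonneg_left _ (Real.rpow_nonneg (abs_nonneg _) _)
            exact Real.rpow_le_rpow (abs_nonneg _) hcase (by linarith)
        _ = 2 * NX * ε ^ (α - α₀) * |t - s| ^ α₀ := by ring
    · -- use pointwise bound
      have hA : |(V t - X t) - (V s - X s)| ≤ 2 * NX * ε ^ α := by
        have h1 := hpt t
        have h2 := hpt s
        calc |(V t - X t) - (V s - X s)| ≤ |V t - X t| + |V s - X s| := abs_sub _ _
          _ ≤ 2 * NX * ε ^ α := by linarith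
      refine hA.trans ?_
      have e : ε ^ α = ε ^ (α - α₀) * ε ^ α₀ := by
        rw [← Real.rpow_add hε]; congr 1; ring
      rw [e]
      calc 2 * NX * (ε ^ (α - α₀) * ε ^ α₀)
          ≤ 2 * NX * (ε ^ (α - α₀) * |t - s| ^ α₀) := by
            apply mul_le_mul_of_nonneg_left _ (by positivity)
            apply mul_le_mul_of_nonneg_left _ hεexp
            exact Real.rpow_le_rpow hε.le hcase hα₀.le
        _ = 2 * NX * ε ^ (α - α₀) * |t - s| ^ α₀ := by ring

/-- for `X ∈ C^α`, `Y ∈ C^β` with `α + β > 1`, the forward, backward and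
symmetric integrals exist (uniformly on `[0,T]`) and all coincide with the Young
integral, the latter being characterized as the limit of the classical integrals
`∫₀ᵗ Y Xₙ' ds` along any `C¹` approximation of `X` in Hölder norm. -/
theorem stmt11 (T α β : ℝ) (hT : 0 < T) (hα : 0 < α) (hβ : 0 < β) (hαβ : 1 < α + β)
    (X Y : ℝ → ℝ) (hXc : Continuous X) (hYc : Continuous Y)
    (hXe : ExtConst T X) (hYe : ExtConst T Y)
    (NX NY : ℝ) (hX : HolderC T α NX X) (hY : HolderC T β NY Y) :
    ∃ YI : ℝ → ℝ,
      -- the three regularized integrals converge uniformly to the same limit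
      TendstoUniformlyOn (fun ε t => Iminus ε Y X t) YI
        (nhdsWithin 0 (Set.Ioi 0)) (Set.Icc 0 T) ∧
      TendstoUniformlyOn (fun ε t => Iplus ε Y X t) YI
        (nhdsWithin 0 (Set.Ioi 0)) (Set.Icc 0 T) ∧
      TendstoUniformlyOn (fun ε t => Izero ε Y X t) YI
        (nhdsWithin 0 (Set.Ioi 0)) (Set.Icc 0 T) ∧
      -- the common limit is the Young integral: it is approximated by classical
      -- integrals along any C¹ approximation of X in any Hölder norm C^{α'}
      -- with α' + β > 1
      (∀ α' : ℝ, 0 < α' → α' ≤ α → 1 < α' + β →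
        ∀ Xn : ℕ → ℝ → ℝ, (∀ n, ContDiff ℝ 1 (Xn n)) →
        (∀ t ∈ Set.Icc (0:ℝ) T, Tendsto (fun n => Xn n t) atTop (nhds (X t))) →
        (∃ N : ℕ → ℝ, Tendsto N atTop (nhds 0) ∧
          ∀ n, HolderC T α' (N n) (fun t => Xn n t - X t)) →
        TendstoUniformlyOn (fun n t => ∫ s in (0:ℝ)..t, Y s * deriv (Xn n) s) YI
          atTop (Set.Icc 0 T)) := by
  have hNX : 0 ≤ NX := holder_nonneg hT hX
  have hNY : 0 ≤ NY := holder_nonneg hT hY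
  set δ : ℝ := min α (α + β - 1) / 2 with hδ
  have hδ0 : 0 < δ := div_pos (lt_min hα (by linarith)) two_pos
  set α₀ : ℝ := α - δ with hα₀def
  have hδα : δ < α := by
    have h1 : min α (α + β - 1) ≤ α := min_le_left _ _
    rw [hδ]; linarith
  have hα₀ : 0 < α₀ := by rw [hα₀def]; linarith
  have hα₀le : α₀ ≤ α := by rw [hα₀def]; linarith
  have hα₀lt : 0 < α - α₀ := by rw [hα₀def]; linarith
  have hα₀β : 1 < α₀ + β := by
    have h1 : min α (α + β - 1) ≤ α + β - 1 := min_le_right _ _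
    have h2 : δ ≤ (α + β - 1) / 2 := by rw [hδ]; linarith
    rw [hα₀def]; linarith
  have globX : ∀ s t : ℝ, |X t - X s| ≤ NX * |t - s| ^ α := holder_glob hT hα hX hXe
  set famV : ℝ → ℝ → ℝ → ℝ := fun p q s => (∫ u in (s+p)..(s+q), X u) / (q - p) with hfam
  -- reference sequence
  set Z : ℕ → ℝ → ℝ := fun n => famV 0 (1/((n:ℝ)+1)) with hZdef
  set ZN : ℕ → ℝ := fun n => 2 * NX * (1/((n:ℝ)+1)) ^ (α - α₀) with hZNdef
  have hεn : ∀ n : ℕ, (0:ℝ) < 1/((n:ℝ)+1) := fun n => by positivity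
  have hZmoll := fun n : ℕ => moll α α₀ NX hα₀ hα₀le hNX X hXc globX (1/((n:ℝ)+1)) 0
      (1/((n:ℝ)+1)) (hεn n) (by linarith [hεn n]) le_rfl (hεn n)
  have hZc : ∀ n, ContDiff ℝ 1 (Z n) := fun n => (hZmoll n).2.1
  have hZN0 : ∀ n, 0 ≤ ZN n := fun n => by
    have h1 : (0:ℝ) ≤ (1/((n:ℝ)+1)) ^ (α - α₀) := (Real.rpow_pos_of_pos (hεn n) _).le
    simp only [hZNdef]; positivity
  have hZH : ∀ n, HolderC T α₀ (ZN n) (fun t => Z n t - X t) :=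
    fun n s _ t _ => (hZmoll n).2.2 s t
  have hZNto : Tendsto ZN atTop (𝓝 0) := by
    have h1 : Tendsto (fun n : ℕ => (1/(n+1:ℝ))) atTop (𝓝 0) :=
      tendsto_one_div_add_atTop_nhds_zero_nat
    have h2 : ContinuousAt (fun x : ℝ => x ^ (α - α₀)) 0 :=
      Real.continuousAt_rpow_const 0 _ (Or.inr hα₀lt.le)
    have h3 := h2.tendsto.comp h1
    rw [Real.zero_rpow hα₀lt.ne'] at h3
    have h4 := h3.const_mul (2*NX)
    rw [mul_zero] at h4
    exact h4.congr (fun n => by simp only [hZNdef, Function.comp_apply])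
  -- pairwise Cauchy estimate
  obtain ⟨K₀, hK₀0, hK₀⟩ := young_bound T β α₀ NY hT hβ hα₀ hα₀β Y hYc hY
  have pair : ∀ n m : ℕ, ∀ t ∈ Set.Icc (0:ℝ) T,
      |(∫ s in (0:ℝ)..t, Y s * deriv (Z n) s) - ∫ s in (0:ℝ)..t, Y s * deriv (Z m) s|
        ≤ K₀ * (ZN n + ZN m) := by
    intro n m t ht
    set D : ℝ → ℝ := fun s => Z n s - Z m s with hD
    have hDc : ContDiff ℝ 1 D := (hZc n).sub (hZc m)
    have hDH : HolderC T α₀ (ZN n + ZN m) D := by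
      intro s hs u hu
      have h1 := hZH n s hs u hu
      have h2 := hZH m s hs u hu
      simp only at h1 h2
      have he : D u - D s = ((Z n u - X u) - (Z n s - X s)) - ((Z m u - X u) - (Z m s - X s)) := by
        simp only [hD]; ring
      rw [he]
      calc |((Z n u - X u) - (Z n s - X s)) - ((Z m u - X u) - (Z m s - X s))|
          ≤ |(Z n u - X u) - (Z n s - X s)| + |(Z m u - X u) - (Z m s - X s)| := abs_sub _ _
        _ ≤ ZN n * |u - s| ^ α₀ + ZN m * |u - s| ^ α₀ := add_le_add h1 h2
        _ = (ZN n + ZN m) * |u - s| ^ α₀ := by ring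
    have hint1 : IntervalIntegrable (fun s => Y s * deriv (Z n) s) volume 0 t :=
      (hYc.mul ((hZc n).continuous_deriv le_rfl)).intervalIntegrable _ _
    have hint2 : IntervalIntegrable (fun s => Y s * deriv (Z m) s) volume 0 t :=
      (hYc.mul ((hZc m).continuous_deriv le_rfl)).intervalIntegrable _ _
    have heq : (∫ s in (0:ℝ)..t, Y s * deriv (Z n) s)
        - (∫ s in (0:ℝ)..t, Y s * deriv (Z m) s) = ∫ s in (0:ℝ)..t, Y s * deriv D s := by
      rw [← intervalIntegral.integral_sub hint1 hint2]
      apply intervalIntegral.integral_congr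
      intro s _
      show Y s * deriv (Z n) s - Y s * deriv (Z m) s = Y s * deriv D s
      have hds : deriv D s = deriv (Z n) s - deriv (Z m) s := by
        apply HasDerivAt.deriv
        exact (((hZc n).differentiable one_ne_zero s).hasDerivAt).sub
          (((hZc m).differentiable one_ne_zero s).hasDerivAt)
      rw [hds]; ring
    rw [heq]
    exact hK₀ D hDc _ (add_nonneg (hZN0 n) (hZN0 m)) hDH t ht
  have hcauchy : ∀ t ∈ Set.Icc (0:ℝ) T,
      CauchySeq (fun n => ∫ s in (0:ℝ)..t, Y s * deriv (Z n) s) := by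
    intro t ht
    rw [Metric.cauchySeq_iff]
    intro η hη
    have hpos : (0:ℝ) < η / (2 * (K₀ + 1)) := by positivity
    have hev : ∀ᶠ n in atTop, ZN n < η / (2 * (K₀ + 1)) :=
      hZNto.eventually_lt_const hpos
    obtain ⟨N₁, hN₁⟩ := eventually_atTop.1 hev
    refine ⟨N₁, fun m hm n hn => ?_⟩
    rw [Real.dist_eq]
    have h1 := pair m n t ht
    have h2 := hN₁ m hm
    have h3 := hN₁ n hn
    have h4 := hZN0 m
    have h5 := hZN0 n
    calc |(∫ s in (0:ℝ)..t, Y s * deriv (Z m) s) - ∫ s in (0:ℝ)..t, Y s * deriv (Z n) s|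
        ≤ K₀ * (ZN m + ZN n) := h1
      _ ≤ (K₀ + 1) * (ZN m + ZN n) := by nlinarith
      _ < η := by
          have hlt : ZN m + ZN n < 2 * (η / (2 * (K₀ + 1))) := by linarith
          have h6 : (K₀ + 1) * (ZN m + ZN n) < (K₀ + 1) * (2 * (η / (2 * (K₀ + 1)))) :=
            mul_lt_mul_of_pos_left hlt (by positivity)
          have h7 : (K₀ + 1) * (2 * (η / (2 * (K₀ + 1)))) = η := by
            field_simp
          linarith
  set YI : ℝ → ℝ := fun t => limUnder atTop (fun n => ∫ s in (0:ℝ)..t, Y s * deriv (Z n) s)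
    with hYIdef
  have hYI : ∀ t ∈ Set.Icc (0:ℝ) T,
      Tendsto (fun n => ∫ s in (0:ℝ)..t, Y s * deriv (Z n) s) atTop (𝓝 (YI t)) :=
    fun t ht => (hcauchy t ht).tendsto_limUnder
  -- M tendsto for the ε-families
  have hMto : Tendsto (fun ε : ℝ => 2 * NX * ε ^ (α - α₀)) (𝓝[>] (0:ℝ)) (𝓝 0) := by
    have h2 : ContinuousAt (fun x : ℝ => x ^ (α - α₀)) 0 :=
      Real.continuousAt_rpow_const 0 _ (Or.inr hα₀lt.le)
    have h3 := h2.tendsto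
    rw [Real.zero_rpow hα₀lt.ne'] at h3
    have h4 := h3.const_mul (2*NX)
    rw [mul_zero] at h4
    exact (h4.congr (fun ε => by ring)).mono_left nhdsWithin_le_nhds
  refine ⟨YI, ?_, ?_, ?_, ?_⟩
  · -- forward
    have hWev : ∀ᶠ ε in 𝓝[>] (0:ℝ), ContDiff ℝ 1 (famV 0 ε) ∧ 0 ≤ 2 * NX * ε ^ (α - α₀) ∧
        HolderC T α₀ (2 * NX * ε ^ (α - α₀)) (fun t => famV 0 ε t - X t) := by
      filter_upwards [self_mem_nhdsWithin] with ε hε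
      rw [Set.mem_Ioi] at hε
      have hm := moll α α₀ NX hα₀ hα₀le hNX X hXc globX ε 0 ε hε (by linarith) le_rfl hε
      have h1 : (0:ℝ) ≤ ε ^ (α - α₀) := (Real.rpow_pos_of_pos hε _).le
      exact ⟨hm.2.1, by positivity, fun s _ t _ => hm.2.2 s t⟩
    have huni := master T β α₀ α₀ NY hT hβ hα₀ hα₀β hα₀ hα₀β X Y hYc hY Z ZN hZc hZN0
      hZNto hZH YI hYI (fun ε => famV 0 ε) (fun ε => 2 * NX * ε ^ (α - α₀)) hMto hWev
    refine huni.congr ?_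
    filter_upwards [self_mem_nhdsWithin] with ε hε
    rw [Set.mem_Ioi] at hε
    intro t _
    have hm := moll α α₀ NX hα₀ hα₀le hNX X hXc globX ε 0 ε hε (by linarith) le_rfl hε
    show (∫ s in (0:ℝ)..t, Y s * deriv (famV 0 ε) s) = Iminus ε Y X t
    rw [Iminus]
    apply intervalIntegral.integral_congr
    intro s _
    show Y s * deriv (famV 0 ε) s = Y s * (X (s + ε) - X s) / ε
    have hder : deriv (famV 0 ε) s = (X (s + ε) - X (s + 0)) / (ε - 0) := (hm.1 s).deriv
    rw [hder, add_zero, sub_zero]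
    ring
  · -- backward
    have hWev : ∀ᶠ ε in 𝓝[>] (0:ℝ), ContDiff ℝ 1 (famV (-ε) 0) ∧ 0 ≤ 2 * NX * ε ^ (α - α₀) ∧
        HolderC T α₀ (2 * NX * ε ^ (α - α₀)) (fun t => famV (-ε) 0 t - X t) := by
      filter_upwards [self_mem_nhdsWithin] with ε hε
      rw [Set.mem_Ioi] at hε
      have hm := moll α α₀ NX hα₀ hα₀le hNX X hXc globX ε (-ε) 0 hε le_rfl hε.le
        (by linarith)
      have h1 : (0:ℝ) ≤ ε ^ (α - α₀) := (Real.rpow_pos_of_pos hε _).le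
      exact ⟨hm.2.1, by positivity, fun s _ t _ => hm.2.2 s t⟩
    have huni := master T β α₀ α₀ NY hT hβ hα₀ hα₀β hα₀ hα₀β X Y hYc hY Z ZN hZc hZN0
      hZNto hZH YI hYI (fun ε => famV (-ε) 0) (fun ε => 2 * NX * ε ^ (α - α₀)) hMto hWev
    refine huni.congr ?_
    filter_upwards [self_mem_nhdsWithin] with ε hε
    rw [Set.mem_Ioi] at hε
    intro t _
    have hm := moll α α₀ NX hα₀ hα₀le hNX X hXc globX ε (-ε) 0 hε le_rfl hε.le (by linarith)
    show (∫ s in (0:ℝ)..t, Y s * deriv (famV (-ε) 0) s) = Iplus ε Y X t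
    rw [Iplus]
    apply intervalIntegral.integral_congr
    intro s _
    show Y s * deriv (famV (-ε) 0) s = Y s * (X s - X (s - ε)) / ε
    have hder : deriv (famV (-ε) 0) s = (X (s + 0) - X (s + -ε)) / (0 - -ε) := (hm.1 s).deriv
    rw [hder, add_zero, show s + -ε = s - ε by ring, show (0:ℝ) - -ε = ε by ring]
    ring
  · -- symmetric
    have hWev : ∀ᶠ ε in 𝓝[>] (0:ℝ), ContDiff ℝ 1 (famV (-ε) ε) ∧ 0 ≤ 2 * NX * ε ^ (α - α₀) ∧
        HolderC T α₀ (2 * NX * ε ^ (α - α₀)) (fun t => famV (-ε) ε t - X t) := by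
      filter_upwards [self_mem_nhdsWithin] with ε hε
      rw [Set.mem_Ioi] at hε
      have hm := moll α α₀ NX hα₀ hα₀le hNX X hXc globX ε (-ε) ε hε le_rfl le_rfl
        (by linarith)
      have h1 : (0:ℝ) ≤ ε ^ (α - α₀) := (Real.rpow_pos_of_pos hε _).le
      exact ⟨hm.2.1, by positivity, fun s _ t _ => hm.2.2 s t⟩
    have huni := master T β α₀ α₀ NY hT hβ hα₀ hα₀β hα₀ hα₀β X Y hYc hY Z ZN hZc hZN0
      hZNto hZH YI hYI (fun ε => famV (-ε) ε) (fun ε => 2 * NX * ε ^ (α - α₀)) hMto hWev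
    refine huni.congr ?_
    filter_upwards [self_mem_nhdsWithin] with ε hε
    rw [Set.mem_Ioi] at hε
    intro t _
    have hm := moll α α₀ NX hα₀ hα₀le hNX X hXc globX ε (-ε) ε hε le_rfl le_rfl (by linarith)
    show (∫ s in (0:ℝ)..t, Y s * deriv (famV (-ε) ε) s) = Izero ε Y X t
    rw [Izero]
    apply intervalIntegral.integral_congr
    intro s _
    show Y s * deriv (famV (-ε) ε) s = Y s * (X (s + ε) - X (s - ε)) / (2 * ε)
    have hder : deriv (famV (-ε) ε) s = (X (s + ε) - X (s + -ε)) / (ε - -ε) := (hm.1 s).deriv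
    rw [hder, show s + -ε = s - ε by ring, show ε - -ε = 2 * ε by ring]
    ring
  · -- Young characterization
    intro α' hα'0 _ hα'β Xn hXnC1 _ hex
    obtain ⟨Nn, hNnto, hNnH⟩ := hex
    exact master T β α' α₀ NY hT hβ hα'0 hα'β hα₀ hα₀β X Y hYc hY Z ZN hZc hZN0 hZNto hZH
      YI hYI Xn Nn hNnto
      (Eventually.of_forall fun n => ⟨hXnC1 n, holder_nonneg hT (hNnH n), hNnH n⟩)
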